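/- For every real X with 0 ≤ X < 1, the double series D(X) = ∑_{n,k≥0} (a)_{2k+n}(1/2)_n(b)_n / ((3/2)_{k+n}(b+1)_{k+n} n!) · (−X/4)^k equals ∑_{n≥0} B_n · G_n(X), where G_n(X) = ∑_{k≥0} (1)_k ((a+n)/2)_k ((a+n+1)/2)_k / ((3/2+n)_k (b+1+n)_k k!) · (−X)^k is a convergent power series for each n, and the outer series over n converges. -/

import Mathlib

/-- Pochhammer symbol (rising factorial) for a real argument. -/
noncomputable def poch (x : ℝ) (n : ℕ) : ℝ := (ascPochhammer ℝ n).eval x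

/-- The coefficients `B_n = (1/2)_n (a)_n (b)_n / ((3/2)_n (b+1)_n n!)`. -/
noncomputable def coeffB (a b : ℝ) (n : ℕ) : ℝ :=
  poch (1 / 2) n * poch a n * poch b n /
    (poch (3 / 2) n * poch (b + 1) n * (Nat.factorial n : ℝ))

/-- The hypergeometric series `G_n(X) = ₃F₂(1, (a+n)/2, (a+n+1)/2; 3/2+n, b+1+n; −X)`. -/
noncomputable def seriesG (a b : ℝ) (n : ℕ) (X : ℝ) : ℝ :=
  ∑' k : ℕ, poch 1 k * poch ((a + n) / 2) k * poch ((a + n + 1) / 2) k /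
    (poch (3 / 2 + (n : ℝ)) k * poch (b + 1 + (n : ℝ)) k * (Nat.factorial k : ℝ)) * (-X) ^ k

/-- The generic term of the series `G_n(X)`. -/
noncomputable def gterm (a b X : ℝ) (n k : ℕ) : ℝ :=
  poch 1 k * poch ((a + n) / 2) k * poch ((a + n + 1) / 2) k /
    (poch (3 / 2 + (n : ℝ)) k * poch (b + 1 + (n : ℝ)) k * (Nat.factorial k : ℝ)) * (-X) ^ k

lemma seriesG_eq (a b X : ℝ) (n : ℕ) : seriesG a b n X = ∑' k : ℕ, gterm a b X n k := rfl

lemma poch_zero (x : ℝ) : poch x 0 = 1 := by simp [poch]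

lemma poch_succ (x : ℝ) (n : ℕ) : poch x (n + 1) = poch x n * (x + n) := by
  simp [poch, ascPochhammer_succ_right]

lemma poch_succ_left (x : ℝ) (n : ℕ) : poch x (n + 1) = x * poch (x + 1) n := by
  simp [poch, ascPochhammer_succ_left, Polynomial.eval_comp]

lemma poch_pos {x : ℝ} (hx : 0 < x) (n : ℕ) : 0 < poch x n := by
  induction n with
  | zero => simp [poch_zero]
  | succ n ih => rw [poch_succ]; positivity

lemma poch_add (x : ℝ) (m n : ℕ) : poch x (m + n) = poch x m * poch (x + m) n := by
  induction n with
  | zero => simp [poch_zero]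
  | succ n ih =>
    have h : m + (n + 1) = (m + n) + 1 := by ring
    rw [h, poch_succ, ih, poch_succ]
    push_cast
    ring

lemma poch_one (k : ℕ) : poch 1 k = Nat.factorial k := by
  induction k with
  | zero => simp [poch_zero]
  | succ k ih => rw [poch_succ, ih, Nat.factorial_succ]; push_cast; ring

lemma poch_double (a : ℝ) (n k : ℕ) :
    poch a (2 * k + n) = poch a n * (4 ^ k * (poch ((a + n) / 2) k * poch ((a + n + 1) / 2) k)) := by
  induction k with
  | zero => simp [poch_zero]
  | succ k ih =>
    have h : 2 * (k + 1) + n = (2 * k + n) + 1 + 1 := by ring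
    rw [h, poch_succ, poch_succ, ih, poch_succ, poch_succ]
    push_cast
    ring

lemma poch_le {x y : ℝ} (hx : 0 < x) (hxy : x ≤ y) (n : ℕ) : poch x n ≤ poch y n := by
  induction n with
  | zero => simp [poch_zero]
  | succ n ih =>
    rw [poch_succ, poch_succ]
    have h1 := poch_pos hx n
    have h2 : (0:ℝ) ≤ x + n := by positivity
    exact mul_le_mul ih (by linarith) h2 (le_of_lt (poch_pos (lt_of_lt_of_le hx hxy) n))

lemma poch_mul_id (x : ℝ) (n : ℕ) : poch x n * (x + n) = x * poch (x + 1) n := by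
  rw [← poch_succ, ← poch_succ_left]

/-- Summability of `(a)_n / (3)_n` for `0 < a < 2`, by telescoping. -/
lemma summable_poch_div {a : ℝ} (ha0 : 0 < a) (ha2 : a < 2) :
    Summable (fun n : ℕ => poch a n / poch 3 n) := by
  have hpos : ∀ n, 0 ≤ poch a n / poch 3 n := fun n =>
    le_of_lt (div_pos (poch_pos ha0 n) (poch_pos (by norm_num) n))
  apply summable_of_sum_range_le (c := 2 / (2 - a)) hpos
  intro N
  have hne : (2:ℝ) - a ≠ 0 := by linarith
  have key : ∀ n : ℕ, poch a n / poch 3 n =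
      (2 / (2 - a)) * (poch a n / poch 2 n - poch a (n+1) / poch 2 (n+1)) := by
    intro n
    have h2 : (0:ℝ) < poch 2 n := poch_pos (by norm_num) n
    have h2n : (0:ℝ) < 2 + (n:ℝ) := by positivity
    have e3 : poch 3 n = poch 2 n * (2 + n) / 2 := by
      have h1 : poch 2 (n+1) = 2 * poch 3 n := by
        have := poch_succ_left 2 n; norm_num at this; linarith
      have h2' : poch 2 (n+1) = poch 2 n * (2 + n) := poch_succ 2 n
      linarith
    rw [poch_succ a n, poch_succ 2 n, e3]
    field_simp
    ring
  calc ∑ n ∈ Finset.range N, poch a n / poch 3 n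
      = ∑ n ∈ Finset.range N, (2 / (2 - a)) *
          (poch a n / poch 2 n - poch a (n+1) / poch 2 (n+1)) :=
        Finset.sum_congr rfl fun n _ => key n
    _ = (2 / (2 - a)) * (poch a 0 / poch 2 0 - poch a N / poch 2 N) := by
        rw [← Finset.mul_sum, Finset.sum_range_sub' (fun n => poch a n / poch 2 n)]
    _ ≤ 2 / (2 - a) := by
        have h1 : poch a 0 / poch 2 0 = 1 := by simp [poch_zero]
        have h2 : 0 ≤ poch a N / poch 2 N :=
          le_of_lt (div_pos (poch_pos ha0 N) (poch_pos (by norm_num) N))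
        have h3 : (0:ℝ) < 2 / (2 - a) := by
          apply div_pos (by norm_num); linarith
        rw [h1]
        nlinarith

/-- Term-by-term identity between the double series and `B_n`-times-`G`-term. -/
lemma hid_lemma (a b X : ℝ) (ha0 : 0 < a) (hb : -(1/2:ℝ) < b) (n k : ℕ) :
      poch a (2 * k + n) * poch (1 / 2) n * poch b n /
        (poch (3 / 2) (k + n) * poch (b + 1) (k + n) * (Nat.factorial n : ℝ)) * (-X / 4) ^ k =
      coeffB a b n * gterm a b X n k := by
    have hq1 : (0:ℝ) < 3 / 2 + (n:ℝ) := by have : (0:ℝ) ≤ n := Nat.cast_nonneg n; linarith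
    have hq2 : (0:ℝ) < b + 1 + (n:ℝ) := by have : (0:ℝ) ≤ n := Nat.cast_nonneg n; linarith
    have h32 : poch (3/2 : ℝ) n ≠ 0 := ne_of_gt (poch_pos (by norm_num) n)
    have hb1n : poch (b+1) n ≠ 0 := ne_of_gt (poch_pos (by linarith) n)
    have h32k : poch (3/2 + (n:ℝ)) k ≠ 0 := ne_of_gt (poch_pos hq1 k)
    have hb1k : poch (b+1+(n:ℝ)) k ≠ 0 := ne_of_gt (poch_pos hq2 k)
    have hfn : (Nat.factorial n : ℝ) ≠ 0 := by positivity
    have hfk : (Nat.factorial k : ℝ) ≠ 0 := by positivity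
    have h4k : ((4:ℝ)) ^ k ≠ 0 := by positivity
    rw [poch_double a n k, show k + n = n + k from Nat.add_comm k n,
      poch_add (3/2 : ℝ) n k, poch_add (b+1) n k, coeffB, gterm, poch_one, div_pow]
    field_simp

set_option maxHeartbeats 1600000 in
theorem stmt_1 (a b X : ℝ) (ha0 : 0 < a) (ha2 : a < 2)
    (hb1 : (a - 1) / 2 < b) (hb2 : b ≤ 3 / 2)
    (hX0 : 0 ≤ X) (hX1 : X < 1) :
    (∀ n : ℕ, Summable (fun k : ℕ =>
        poch 1 k * poch ((a + n) / 2) k * poch ((a + n + 1) / 2) k /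
          (poch (3 / 2 + (n : ℝ)) k * poch (b + 1 + (n : ℝ)) k * (Nat.factorial k : ℝ)) *
          (-X) ^ k)) ∧
    Summable (fun n : ℕ => coeffB a b n * seriesG a b n X) ∧
    (∑' nk : ℕ × ℕ,
        poch a (2 * nk.2 + nk.1) * poch (1 / 2) nk.1 * poch b nk.1 /
          (poch (3 / 2) (nk.2 + nk.1) * poch (b + 1) (nk.2 + nk.1) *
            (Nat.factorial nk.1 : ℝ)) * (-X / 4) ^ nk.2) =
      ∑' n : ℕ, coeffB a b n * seriesG a b n X := by
  have hb : -(1/2 : ℝ) < b := by linarith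
  have hfac : ∀ k : ℕ, (0:ℝ) < (Nat.factorial k : ℝ) := fun k => by
    exact_mod_cast Nat.factorial_pos k
  have hp1 : ∀ n : ℕ, (0:ℝ) < (a + n) / 2 := fun n => by
    have : (0:ℝ) ≤ n := Nat.cast_nonneg n; linarith
  have hp2 : ∀ n : ℕ, (0:ℝ) < (a + n + 1) / 2 := fun n => by
    have : (0:ℝ) ≤ n := Nat.cast_nonneg n; linarith
  have hq1 : ∀ n : ℕ, (0:ℝ) < 3 / 2 + (n:ℝ) := fun n => by
    have : (0:ℝ) ≤ n := Nat.cast_nonneg n; linarith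
  have hq2 : ∀ n : ℕ, (0:ℝ) < b + 1 + (n:ℝ) := fun n => by
    have : (0:ℝ) ≤ n := Nat.cast_nonneg n; linarith
  have hratio : ∀ n k : ℕ,
      poch ((a + n) / 2) k * poch ((a + n + 1) / 2) k ≤
        poch (b + 1 + (n : ℝ)) k * poch (3 / 2 + (n : ℝ)) k := by
    intro n k
    have hn : (0:ℝ) ≤ n := Nat.cast_nonneg n
    have h1 : poch ((a + n) / 2) k ≤ poch (b + 1 + (n : ℝ)) k :=
      poch_le (hp1 n) (by linarith) k
    have h2 : poch ((a + n + 1) / 2) k ≤ poch (3 / 2 + (n : ℝ)) k :=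
      poch_le (hp2 n) (by linarith) k
    exact mul_le_mul h1 h2 (le_of_lt (poch_pos (hp2 n) k)) (le_of_lt (poch_pos (hq2 n) k))
  have hgabs : ∀ n k : ℕ, |gterm a b X n k| ≤ X ^ k := by
    intro n k
    have hD : (0:ℝ) < poch (3 / 2 + (n:ℝ)) k * poch (b + 1 + (n:ℝ)) k * (Nat.factorial k : ℝ) := by
      have h1 := poch_pos (hq1 n) k; have h2 := poch_pos (hq2 n) k; have h3 := hfac k; positivity
    have hone : (0:ℝ) < poch 1 k := poch_pos one_pos k
    have hc0 : 0 ≤ poch 1 k * poch ((a + n) / 2) k * poch ((a + n + 1) / 2) k /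
        (poch (3 / 2 + (n:ℝ)) k * poch (b + 1 + (n:ℝ)) k * (Nat.factorial k : ℝ)) := by
      have h1 := poch_pos (hp1 n) k; have h2 := poch_pos (hp2 n) k
      positivity
    have hc1 : poch 1 k * poch ((a + n) / 2) k * poch ((a + n + 1) / 2) k /
        (poch (3 / 2 + (n:ℝ)) k * poch (b + 1 + (n:ℝ)) k * (Nat.factorial k : ℝ)) ≤ 1 := by
      rw [div_le_one hD, poch_one]
      nlinarith [hratio n k, hfac k, poch_pos (hp1 n) k, poch_pos (hp2 n) k]
    rw [gterm, abs_mul, abs_pow, abs_neg, abs_of_nonneg hX0, abs_of_nonneg hc0]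
    calc _ ≤ 1 * X ^ k := mul_le_mul_of_nonneg_right hc1 (pow_nonneg hX0 k)
      _ = X ^ k := one_mul _
  have hgeom : Summable (fun k : ℕ => X ^ k) := summable_geometric_of_lt_one hX0 hX1
  have part1 : ∀ n : ℕ, Summable (gterm a b X n) := by
    intro n
    exact Summable.of_abs
      (Summable.of_nonneg_of_le (fun k => abs_nonneg _) (hgabs n) hgeom)
  -- bound on coeffB
  have hBpos : ∀ n : ℕ, 0 ≤ poch a n / poch 3 n := fun n =>
    le_of_lt (div_pos (poch_pos ha0 n) (poch_pos (by norm_num) n))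
  have hB : ∀ n : ℕ, |coeffB a b n| ≤ 5 * (poch a n / poch 3 n) := by
    intro n
    match n with
    | 0 => simp [coeffB, poch_zero]
    | (m + 1) =>
      set n : ℕ := m + 1 with hn
      have hm1 : (1:ℝ) ≤ (n:ℝ) := by exact_mod_cast Nat.one_le_iff_ne_zero.mpr (by omega)
      have hbn : (0:ℝ) < b + n := by linarith
      have h12 : (0:ℝ) < poch (1/2) n := poch_pos (by norm_num) n
      have h32 : (0:ℝ) < poch (3/2) n := poch_pos (by norm_num) n
      have hb1n : (0:ℝ) < poch (b+1) n := poch_pos (by linarith) n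
      have h3 : (0:ℝ) < poch 3 n := poch_pos (by norm_num) n
      have hfa : (0:ℝ) < poch a n := poch_pos ha0 n
      have hfn := hfac n
      have E1 : poch (3/2) n = poch (1/2) n * (1 + 2 * (n:ℝ)) := by
        have h1 := poch_succ_left (1/2) n
        have h2 := poch_succ (1/2) n
        norm_num at h1
        rw [h2] at h1
        linear_combination (-2 : ℝ) * h1
      have E2 : 2 * poch 3 n = (Nat.factorial n : ℝ) * ((n:ℝ) + 1) * ((n:ℝ) + 2) := by
        have h1 : poch 1 (2 + n) = 2 * poch 3 n := by
          rw [poch_add 1 2 n]; norm_num [poch_one, Nat.factorial]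
        have h3' : poch 1 (2 + n) = ((n:ℝ) + 2) * (((n:ℝ) + 1) * (Nat.factorial n : ℝ)) := by
          rw [poch_one, show 2 + n = (n + 1) + 1 from by omega, Nat.factorial_succ,
            Nat.factorial_succ]
          push_cast
          ring
        linear_combination h3' - h1
      have E3 : |poch b n| * (b + (n:ℝ)) = |b| * poch (b+1) n := by
        have h1 := poch_mul_id b n
        have h2 : |poch b n * (b + (n:ℝ))| = |b * poch (b+1) n| := by rw [h1]
        rw [abs_mul, abs_mul, abs_of_pos hbn, abs_of_pos hb1n] at h2
        exact h2
      have habsb : |b| ≤ 3/2 := abs_le.mpr ⟨by linarith, hb2⟩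
      have step2 : |b| * (((n:ℝ) + 1) * ((n:ℝ) + 2)) ≤ 10 * (1 + 2 * (n:ℝ)) * (b + (n:ℝ)) := by
        nlinarith [abs_nonneg b, sq_nonneg ((n:ℝ) - 1)]
      have eL : poch (1/2) n * poch a n * |poch b n| * poch 3 n * (2 * (b + (n:ℝ))) =
          (poch (1/2) n * poch a n * poch (b+1) n * (Nat.factorial n : ℝ)) *
            (|b| * (((n:ℝ) + 1) * ((n:ℝ) + 2))) := by
        linear_combination (poch (1/2) n * poch a n * |poch b n| * (b + (n:ℝ))) * E2 +
          (poch (1/2) n * poch a n * (Nat.factorial n : ℝ) * (((n:ℝ) + 1) * ((n:ℝ) + 2))) * E3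
      have eR : 5 * poch a n * (poch (3/2) n * poch (b+1) n * (Nat.factorial n : ℝ)) *
            (2 * (b + (n:ℝ))) =
          (poch (1/2) n * poch a n * poch (b+1) n * (Nat.factorial n : ℝ)) *
            (10 * (1 + 2 * (n:ℝ)) * (b + (n:ℝ))) := by
        linear_combination (10 * poch a n * poch (b+1) n * (Nat.factorial n : ℝ) * (b + (n:ℝ))) * E1
      have main : poch (1/2) n * poch a n * |poch b n| * poch 3 n * (2 * (b + (n:ℝ))) ≤
          5 * poch a n * (poch (3/2) n * poch (b+1) n * (Nat.factorial n : ℝ)) *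
            (2 * (b + (n:ℝ))) := by
        rw [eL, eR]
        exact mul_le_mul_of_nonneg_left step2 (by positivity)
      have main2 : poch (1/2) n * poch a n * |poch b n| * poch 3 n ≤
          5 * poch a n * (poch (3/2) n * poch (b+1) n * (Nat.factorial n : ℝ)) :=
        le_of_mul_le_mul_right (by linarith [main]) (by positivity : (0:ℝ) < 2 * (b + (n:ℝ)))
      have habsB : |coeffB a b n| = poch (1/2) n * poch a n * |poch b n| /
          (poch (3/2) n * poch (b+1) n * (Nat.factorial n : ℝ)) := by
        rw [coeffB, abs_div, abs_mul, abs_mul, abs_of_pos h12, abs_of_pos hfa,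
          abs_of_pos (by positivity : (0:ℝ) < poch (3/2) n * poch (b+1) n * (Nat.factorial n : ℝ))]
      rw [habsB, mul_div_assoc' 5 (poch a n) (poch 3 n),
        div_le_div_iff₀ (by positivity) h3]
      exact main2
  -- part 2
  have hSa := summable_poch_div ha0 ha2
  have habs_sum : ∀ n, Summable fun k => |gterm a b X n k| := fun n =>
    Summable.of_nonneg_of_le (fun k => abs_nonneg _) (hgabs n) hgeom
  have hXinv : (0:ℝ) < (1 - X)⁻¹ := by
    apply inv_pos.mpr; linarith
  have hGbound : ∀ n, |seriesG a b n X| ≤ (1 - X)⁻¹ := by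
    intro n
    calc |seriesG a b n X| = ‖∑' k, gterm a b X n k‖ := by
          rw [Real.norm_eq_abs, seriesG_eq]
      _ ≤ ∑' k, ‖gterm a b X n k‖ :=
          norm_tsum_le_tsum_norm (by simpa [Real.norm_eq_abs] using habs_sum n)
      _ = ∑' k, |gterm a b X n k| := by simp [Real.norm_eq_abs]
      _ ≤ ∑' k : ℕ, X ^ k := Summable.tsum_le_tsum (hgabs n) (habs_sum n) hgeom
      _ = (1 - X)⁻¹ := tsum_geometric_of_lt_one hX0 hX1
  have hmajn : Summable (fun n : ℕ => 5 * (poch a n / poch 3 n) * (1 - X)⁻¹) :=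
    (hSa.mul_left 5).mul_right _
  have part2 : Summable fun n : ℕ => coeffB a b n * seriesG a b n X := by
    apply Summable.of_abs
    apply Summable.of_nonneg_of_le (fun n => abs_nonneg _) ?_ hmajn
    intro n
    rw [abs_mul]
    exact mul_le_mul (hB n) (hGbound n) (abs_nonneg _)
      (mul_nonneg (by norm_num) (hBpos n))
  -- part 3
  refine ⟨part1, part2, ?_⟩
  have hid : ∀ n k : ℕ,
      poch a (2 * k + n) * poch (1 / 2) n * poch b n /
        (poch (3 / 2) (k + n) * poch (b + 1) (k + n) * (Nat.factorial n : ℝ)) * (-X / 4) ^ k =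
      coeffB a b n * gterm a b X n k := fun n k => hid_lemma a b X ha0 hb n k
  have hFabs : ∀ nk : ℕ × ℕ,
      |poch a (2 * nk.2 + nk.1) * poch (1 / 2) nk.1 * poch b nk.1 /
        (poch (3 / 2) (nk.2 + nk.1) * poch (b + 1) (nk.2 + nk.1) *
          (Nat.factorial nk.1 : ℝ)) * (-X / 4) ^ nk.2| ≤
        (5 * (poch a nk.1 / poch 3 nk.1)) * X ^ nk.2 := by
    rintro ⟨n, k⟩
    show |poch a (2 * k + n) * poch (1 / 2) n * poch b n /
        (poch (3 / 2) (k + n) * poch (b + 1) (k + n) * (Nat.factorial n : ℝ)) * (-X / 4) ^ k| ≤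
        (5 * (poch a n / poch 3 n)) * X ^ k
    rw [hid n k, abs_mul]
    exact mul_le_mul (hB n) (hgabs n k) (abs_nonneg _)
      (mul_nonneg (by norm_num) (hBpos n))
  have hmaj2 : Summable (fun nk : ℕ × ℕ => (5 * (poch a nk.1 / poch 3 nk.1)) * X ^ nk.2) :=
    Summable.mul_of_nonneg (hSa.mul_left 5) hgeom
      (fun n => mul_nonneg (by norm_num) (hBpos n)) (fun k => pow_nonneg hX0 k)
  have hFsum : Summable (fun nk : ℕ × ℕ =>
      poch a (2 * nk.2 + nk.1) * poch (1 / 2) nk.1 * poch b nk.1 /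
        (poch (3 / 2) (nk.2 + nk.1) * poch (b + 1) (nk.2 + nk.1) *
          (Nat.factorial nk.1 : ℝ)) * (-X / 4) ^ nk.2) :=
    Summable.of_abs (Summable.of_nonneg_of_le (fun _ => abs_nonneg _) hFabs hmaj2)
  have hFinner : ∀ n : ℕ, Summable (fun k : ℕ =>
      poch a (2 * k + n) * poch (1 / 2) n * poch b n /
        (poch (3 / 2) (k + n) * poch (b + 1) (k + n) * (Nat.factorial n : ℝ)) *
        (-X / 4) ^ k) := by
    intro n
    exact Summable.congr ((part1 n).mul_left (coeffB a b n)) (fun k => (hid n k).symm)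
  rw [Summable.tsum_prod' hFsum hFinner]
  exact tsum_congr fun n =>
    (tsum_congr fun k => hid n k).trans (by rw [tsum_mul_left, ← seriesG_eq])
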